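/- Let E be a real Hilbert space, f : E → ℝ differentiable, μ-strongly convex with μ ≥ 0 and L-smooth. Then for every γ ∈ (0, 2/(μ+L)] and all x, y ∈ E: ‖(x − γ∇f(x)) − (y − γ∇f(y))‖ ≤ (1 − γμ)‖x − y‖. -/

import Mathlib

open InnerProductSpace

section DaveAux

variable {E : Type*} [NormedAddCommGroup E] [InnerProductSpace ℝ E] [CompleteSpace E]

local notation "⟪" x ", " y "⟫" => @inner ℝ _ _ x y

/-- derivative along a line -/
lemma aux_line_hasDerivAt {f : E → ℝ} {g : E} (a v : E) (t : ℝ)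
    (h : HasGradientAt f g (a + t • v)) :
    HasDerivAt (fun s : ℝ => f (a + s • v)) ⟪g, v⟫ t := by
  have h1 : HasDerivAt (fun s : ℝ => a + s • v) v t := by
    simpa using ((hasDerivAt_id t).smul_const v).const_add a
  have := h.hasFDerivAt.comp_hasDerivAt t h1
  simpa [toDual_apply_apply, Function.comp_def] using this

/-- first-order condition of a convex differentiable function -/
lemma aux_first_order {h : E → ℝ} {h' : E → E}
    (hconv : ConvexOn ℝ Set.univ h) (hdiff : ∀ z, HasGradientAt h (h' z) z)
    (a b : E) : h a + ⟪h' a, b - a⟫ ≤ h b := by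
  set v := b - a with hv
  have hφ : ConvexOn ℝ Set.univ (fun s : ℝ => h (a + s • v)) := by
    have := hconv.comp_affineMap (AffineMap.lineMap a b)
    simpa [Function.comp_def, AffineMap.lineMap_apply, add_comm, hv] using this
  have hder : HasDerivAt (fun s : ℝ => h (a + s • v)) ⟪h' a, v⟫ 0 := by
    exact aux_line_hasDerivAt (f := h) (g := h' a) a v 0 (by simpa using hdiff a)
  have := hφ.le_slope_of_hasDerivAt (Set.mem_univ 0) (Set.mem_univ 1) one_pos hder
  rw [slope_def_field] at this
  simp only [zero_smul, add_zero, one_smul] at this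
  rw [show a + v = b from by simp [hv]] at this
  have : ⟪h' a, v⟫ ≤ h b - h a := by simpa using this
  linarith

/-- gradient of `f - c/2 * ‖·‖²` -/
lemma aux_grad_quad {f : E → ℝ} {f' : E → E} (c : ℝ)
    (hdiff : ∀ z, HasGradientAt f (f' z) z) (z : E) :
    HasGradientAt (fun w => f w - c / 2 * ‖w‖ ^ 2) (f' z - c • z) z := by
  rw [hasGradientAt_iff_hasFDerivAt]
  have h1 : HasFDerivAt (fun w : E => ‖w‖ ^ 2) (2 • (innerSL ℝ z)) z := by
    simpa using (hasFDerivAt_id z).norm_sq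
  have h2 := ((hdiff z).hasFDerivAt).sub (h1.const_mul (c / 2))
  refine h2.congr_fderiv ?_
  ext v
  simp [toDual_apply_apply, inner_sub_left, real_inner_smul_left]
  ring

/-- descent lemma -/
lemma aux_descent {f : E → ℝ} {f' : E → E} {L : ℝ}
    (hdiff : ∀ z, HasGradientAt f (f' z) z)
    (hsmooth : ∀ x y, ‖f' x - f' y‖ ≤ L * ‖x - y‖) (a b : E) :
    f b ≤ f a + ⟪f' a, b - a⟫ + L / 2 * ‖b - a‖ ^ 2 := by
  set v := b - a with hv
  set ψ : ℝ → ℝ := fun t => f (a + t • v) - (t * ⟪f' a, v⟫ + L / 2 * ‖v‖ ^ 2 * t ^ 2) with hψ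
  have hder : ∀ t : ℝ, HasDerivAt ψ
      (⟪f' (a + t • v), v⟫ - (⟪f' a, v⟫ + L / 2 * ‖v‖ ^ 2 * (2 * t))) t := by
    intro t
    have h1 := aux_line_hasDerivAt (f := f) (g := f' (a + t • v)) a v t (hdiff _)
    have h2 : HasDerivAt (fun t : ℝ => t * ⟪f' a, v⟫ + L / 2 * ‖v‖ ^ 2 * t ^ 2)
        (1 * ⟪f' a, v⟫ + L / 2 * ‖v‖ ^ 2 * (2 * t ^ 1)) t :=
      ((hasDerivAt_id t).mul_const _).add ((hasDerivAt_pow 2 t).const_mul _)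
    simpa [one_mul, hψ, Pi.sub_def] using h1.sub h2
  have hanti : AntitoneOn ψ (Set.Icc (0:ℝ) 1) := by
    apply antitoneOn_of_deriv_nonpos (convex_Icc 0 1)
    · exact Continuous.continuousOn (by
        have : Differentiable ℝ ψ := fun t => (hder t).differentiableAt
        exact this.continuous)
    · intro t ht
      exact (hder t).differentiableAt.differentiableWithinAt
    · intro t ht
      rw [interior_Icc] at ht
      rw [(hder t).deriv]
      have hb1 : ⟪f' (a + t • v) - f' a, v⟫ ≤ ‖f' (a + t • v) - f' a‖ * ‖v‖ :=
        real_inner_le_norm _ _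
      have hb2 : ‖f' (a + t • v) - f' a‖ ≤ L * (t * ‖v‖) := by
        have := hsmooth (a + t • v) a
        simpa [norm_smul, abs_of_pos ht.1, mul_assoc] using this
      have hb3 : ⟪f' (a + t • v), v⟫ - ⟪f' a, v⟫ ≤ L * (t * ‖v‖) * ‖v‖ := by
        rw [← inner_sub_left]
        calc ⟪f' (a + t • v) - f' a, v⟫ ≤ ‖f' (a + t • v) - f' a‖ * ‖v‖ := hb1
        _ ≤ L * (t * ‖v‖) * ‖v‖ := by
            apply mul_le_mul_of_nonneg_right hb2 (norm_nonneg _)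
      nlinarith [sq_nonneg ‖v‖, norm_nonneg v]
  have := hanti (Set.mem_Icc.2 ⟨le_refl 0, zero_le_one⟩) (Set.mem_Icc.2 ⟨zero_le_one, le_refl 1⟩)
      zero_le_one
  simp only [hψ, zero_smul, add_zero, one_smul] at this
  rw [show a + v = b from by simp [hv]] at this
  nlinarith [this]

/-- co-coercivity of a convex smooth function -/
lemma aux_coco {h : E → ℝ} {h' : E → E} {K : ℝ} (hK : 0 < K)
    (LB : ∀ a b : E, h a + ⟪h' a, b - a⟫ ≤ h b)
    (UB : ∀ a b : E, h b ≤ h a + ⟪h' a, b - a⟫ + K / 2 * ‖b - a‖ ^ 2)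
    (a b : E) : (1 / K) * ‖h' a - h' b‖ ^ 2 ≤ ⟪h' a - h' b, a - b⟫ := by
  have key : ∀ p q : E, h p + ⟪h' p, q - p⟫ + 1 / (2 * K) * ‖h' q - h' p‖ ^ 2 ≤ h q := by
    intro p q
    set u := h' q - h' p with hu
    set z := q - (1 / K) • u with hz
    have c1 := LB p z
    have c2 := UB q z
    have hz1 : z - q = -((1 / K) • u) := by rw [hz]; abel
    have e1 : ⟪h' q, z - q⟫ = -((1 / K) * ⟪h' q, u⟫) := by
      rw [hz1, inner_neg_right, real_inner_smul_right]
    have e2 : ‖z - q‖ ^ 2 = (1 / K) ^ 2 * ‖u‖ ^ 2 := by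
      rw [hz1, norm_neg, norm_smul, mul_pow]
      congr 1
      rw [Real.norm_eq_abs, abs_of_pos (by positivity)]
    have e3 : ⟪h' p, z - p⟫ = ⟪h' p, q - p⟫ - (1 / K) * ⟪h' p, u⟫ := by
      have : z - p = (q - p) - (1 / K) • u := by rw [hz]; abel
      rw [this, inner_sub_right, real_inner_smul_right]
    have einner : ⟪h' q, u⟫ - ⟪h' p, u⟫ = ‖u‖ ^ 2 := by
      rw [← inner_sub_left, ← hu, real_inner_self_eq_norm_sq]
    rw [e3] at c1
    rw [e1, e2] at c2
    have efield : K / 2 * ((1 / K) ^ 2 * ‖u‖ ^ 2) = 1 / (2 * K) * ‖u‖ ^ 2 := by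
      field_simp
    have efield2 : (1 / K) * ⟪h' q, u⟫ - (1 / K) * ⟪h' p, u⟫ = 2 * (1 / (2 * K) * ‖u‖ ^ 2) := by
      rw [← mul_sub, einner]; field_simp
    rw [efield] at c2
    linarith
  have k1 := key a b
  have k2 := key b a
  have e4 : ‖h' a - h' b‖ = ‖h' b - h' a‖ := norm_sub_rev _ _
  have e5 : ⟪h' b, a - b⟫ = -⟪h' b, b - a⟫ := by
    rw [← inner_neg_right]; congr 1; abel
  have e6 : ⟪h' a, b - a⟫ - ⟪h' b, b - a⟫ = -⟪h' a - h' b, a - b⟫ := by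
    rw [← inner_sub_left, ← inner_neg_right]; congr 1; abel
  have e7 : (1 : ℝ) / K = 2 * (1 / (2 * K)) := by field_simp
  rw [e4, e7]
  rw [e5, e4] at k2
  linarith [k1, k2, e6]

end DaveAux

set_option maxHeartbeats 1000000 in
/-- the gradient step of a `μ`-strongly convex (`μ ≥ 0`) and `L`-smooth
function with stepsize `γ ∈ (0, 2/(μ+L)]` is a `(1 - γμ)`-contraction. -/
theorem dave_rpg_gradient_step_contraction
    {E : Type*} [NormedAddCommGroup E] [InnerProductSpace ℝ E] [CompleteSpace E]
    (f : E → ℝ) (f' : E → E) (μ L : ℝ) (hμ : 0 ≤ μ)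
    (hdiff : ∀ x, HasGradientAt f (f' x) x)
    (hsconv : ConvexOn ℝ Set.univ (fun x => f x - μ / 2 * ‖x‖ ^ 2))
    (hsmooth : ∀ x y, ‖f' x - f' y‖ ≤ L * ‖x - y‖)
    (γ : ℝ) (hγ0 : 0 < γ) (hγle : γ ≤ 2 / (μ + L)) (x y : E) :
    ‖x - γ • f' x - (y - γ • f' y)‖ ≤ (1 - γ * μ) * ‖x - y‖ := by
  by_cases hxy : x = y
  · subst hxy; simp
  have hμL : 0 < μ + L := by
    by_contra hc
    push_neg at hc
    have h2 : (2:ℝ) / (μ + L) ≤ 0 := div_nonpos_of_nonneg_of_nonpos (by norm_num) hc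
    linarith
  have hd0 : x - y ≠ 0 := sub_ne_zero.mpr hxy
  have hdpos : 0 < ‖x - y‖ := norm_pos_iff.mpr hd0
  have hgrad : ∀ z, HasGradientAt (fun w => f w - μ / 2 * ‖w‖ ^ 2) (f' z - μ • z) z :=
    fun z => aux_grad_quad μ hdiff z
  -- strong convexity inequality
  have S : ∀ a b : E, f a + ⟪f' a, b - a⟫_ℝ + μ / 2 * ‖b - a‖ ^ 2 ≤ f b := by
    intro a b
    have FO := aux_first_order hsconv hgrad a b
    have e1 : ⟪f' a - μ • a, b - a⟫_ℝ = ⟪f' a, b - a⟫_ℝ - μ * ⟪a, b - a⟫_ℝ := by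
      rw [inner_sub_left, real_inner_smul_left]
    have e2 : ⟪a, b - a⟫_ℝ = ⟪a, b⟫_ℝ - ‖a‖ ^ 2 := by
      rw [inner_sub_right, real_inner_self_eq_norm_sq]
    have e3 : ‖b - a‖ ^ 2 = ‖b‖ ^ 2 - 2 * ⟪a, b⟫_ℝ + ‖a‖ ^ 2 := by
      rw [norm_sub_sq_real, real_inner_comm]
    have key : f a + ⟪f' a, b - a⟫_ℝ + μ / 2 * ‖b - a‖ ^ 2
        = (f a - μ / 2 * ‖a‖ ^ 2) + ⟪f' a - μ • a, b - a⟫_ℝ + μ / 2 * ‖b‖ ^ 2 := by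
      rw [e1, e2, e3]; ring
    linarith [FO]
  have D : ∀ a b : E, f b ≤ f a + ⟪f' a, b - a⟫_ℝ + L / 2 * ‖b - a‖ ^ 2 :=
    fun a b => aux_descent hdiff hsmooth a b
  have hμleL : μ ≤ L := by
    have h1 := S x y
    have h2 := D x y
    have hn : 0 < ‖y - x‖ := by rw [norm_sub_rev]; exact hdpos
    nlinarith [mul_pos hn hn]
  set d := x - y with hd
  set g := f' x - f' y with hg
  -- monotonicity
  have mono : μ * ‖d‖ ^ 2 ≤ ⟪g, d⟫_ℝ := by
    have h1 := S x y
    have h2 := S y x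
    have e1 : ⟪f' x, y - x⟫_ℝ = -⟪f' x, d⟫_ℝ := by
      rw [← inner_neg_right]; congr 1; rw [hd]; abel
    have e2 : ⟪g, d⟫_ℝ = ⟪f' x, d⟫_ℝ - ⟪f' y, d⟫_ℝ := by rw [hg, inner_sub_left]
    have e3 : ‖y - x‖ = ‖d‖ := by rw [hd, norm_sub_rev]
    have e4 : x - y = d := hd.symm
    rw [e1, e3] at h1
    rw [e4] at h2
    linarith [h1, h2, e2]
  -- key interpolation inequality
  have star : μ * L * ‖d‖ ^ 2 + ‖g‖ ^ 2 ≤ (μ + L) * ⟪g, d⟫_ℝ := by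
    rcases lt_or_eq_of_le hμleL with hlt | heq
    · -- μ < L : use co-coercivity of f - μ/2‖·‖²
      have hK : (0:ℝ) < L - μ := by linarith
      have UB : ∀ a b : E, (fun w => f w - μ / 2 * ‖w‖ ^ 2) b ≤
          (fun w => f w - μ / 2 * ‖w‖ ^ 2) a + ⟪f' a - μ • a, b - a⟫_ℝ
            + (L - μ) / 2 * ‖b - a‖ ^ 2 := by
        intro a b
        have hD := D a b
        have e1 : ⟪f' a - μ • a, b - a⟫_ℝ = ⟪f' a, b - a⟫_ℝ - μ * ⟪a, b - a⟫_ℝ := by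
          rw [inner_sub_left, real_inner_smul_left]
        have e2 : ⟪a, b - a⟫_ℝ = ⟪a, b⟫_ℝ - ‖a‖ ^ 2 := by
          rw [inner_sub_right, real_inner_self_eq_norm_sq]
        have e3 : ‖b - a‖ ^ 2 = ‖b‖ ^ 2 - 2 * ⟪a, b⟫_ℝ + ‖a‖ ^ 2 := by
          rw [norm_sub_sq_real, real_inner_comm]
        simp only
        rw [e1, e2, e3]
        nlinarith [hD, e3]
      have LB : ∀ a b : E, (fun w => f w - μ / 2 * ‖w‖ ^ 2) a
          + ⟪f' a - μ • a, b - a⟫_ℝ ≤ (fun w => f w - μ / 2 * ‖w‖ ^ 2) b :=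
        fun a b => aux_first_order hsconv hgrad a b
      have coco := aux_coco hK LB UB x y
      have ew : (f' x - μ • x) - (f' y - μ • y) = g - μ • d := by
        rw [hg, hd, smul_sub]; abel
      rw [ew] at coco
      have en : ‖g - μ • d‖ ^ 2 = ‖g‖ ^ 2 - 2 * (μ * ⟪g, d⟫_ℝ) + μ ^ 2 * ‖d‖ ^ 2 := by
        rw [norm_sub_sq_real, real_inner_smul_right, norm_smul, mul_pow,
          Real.norm_eq_abs, sq_abs]
      have ei : ⟪g - μ • d, d⟫_ℝ = ⟪g, d⟫_ℝ - μ * ‖d‖ ^ 2 := by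
        rw [inner_sub_left, real_inner_smul_left, real_inner_self_eq_norm_sq]
      rw [en, ei] at coco
      have hmul := mul_le_mul_of_nonneg_left coco (le_of_lt hK)
      have hclear : (L - μ) * (1 / (L - μ)
          * (‖g‖ ^ 2 - 2 * (μ * ⟪g, d⟫_ℝ) + μ ^ 2 * ‖d‖ ^ 2))
          = ‖g‖ ^ 2 - 2 * (μ * ⟪g, d⟫_ℝ) + μ ^ 2 * ‖d‖ ^ 2 := by
        field_simp
      rw [hclear] at hmul
      nlinarith [hmul]
    · -- μ = L
      subst heq
      have h2 := hsmooth x y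
      have hg2 : ‖g‖ ^ 2 ≤ μ ^ 2 * ‖d‖ ^ 2 := by
        nlinarith [h2, norm_nonneg g, norm_nonneg d, mul_nonneg hμ (norm_nonneg d)]
      nlinarith [mono, hg2, hμ]
  -- norm lower bound on g
  have hg2 : μ ^ 2 * ‖d‖ ^ 2 ≤ ‖g‖ ^ 2 := by
    have hcs : ⟪g, d⟫_ℝ ≤ ‖g‖ * ‖d‖ := real_inner_le_norm _ _
    nlinarith [mono, hcs, norm_nonneg g, norm_nonneg d, mul_nonneg hμ (norm_nonneg d), hdpos]
  have hγs : γ * (μ + L) ≤ 2 := by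
    rw [le_div_iff₀ hμL] at hγle; linarith
  have hγμ : 0 ≤ 1 - γ * μ := by
    have h1 : γ * μ ≤ 2 / (μ + L) * μ := mul_le_mul_of_nonneg_right hγle hμ
    have h2 : 2 / (μ + L) * μ ≤ 1 := by
      rw [div_mul_eq_mul_div, div_le_one hμL]; linarith
    linarith
  have hrw : x - γ • f' x - (y - γ • f' y) = d - γ • g := by
    rw [hd, hg, smul_sub]; abel
  rw [hrw]
  have expand : ‖d - γ • g‖ ^ 2 = ‖d‖ ^ 2 - 2 * (γ * ⟪g, d⟫_ℝ) + γ ^ 2 * ‖g‖ ^ 2 := by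
    rw [norm_sub_sq_real, real_inner_smul_right, norm_smul, mul_pow,
      Real.norm_eq_abs, sq_abs, real_inner_comm]
  have hsq : ‖d - γ • g‖ ^ 2 ≤ ((1 - γ * μ) * ‖d‖) ^ 2 := by
    rw [expand]
    have hfinal : (μ + L) * (‖d‖ ^ 2 - 2 * (γ * ⟪g, d⟫_ℝ) + γ ^ 2 * ‖g‖ ^ 2)
        ≤ (μ + L) * (((1 - γ * μ) * ‖d‖) ^ 2) := by
      have hc1 : 0 ≤ γ * (2 - γ * (μ + L)) * (‖g‖ ^ 2 - μ ^ 2 * ‖d‖ ^ 2) :=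
        mul_nonneg (mul_nonneg hγ0.le (by linarith)) (by linarith)
      have hc2 := mul_le_mul_of_nonneg_left star hγ0.le
      nlinarith [hc1, hc2]
    exact le_of_mul_le_mul_left hfinal hμL
  nlinarith [hsq, norm_nonneg (d - γ • g), mul_nonneg hγμ (norm_nonneg d)]
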